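/- arXiv:2004.13265 — 6 statements merged into one kernel-verified Lean document; each statement's English description precedes it below -/
import Mathlib

section
/- For a choice function C on subsets of a finite contract set X satisfying C(Y) ⊆ Y for all Y, the irrelevance of rejected contracts (IRC) condition holds if and only if C is path-independent-consistent in the following sense: for all Y ⊆ X and all Z with C(Y) ⊆ Z ⊆ Y, we have C(Z) = C(Y). -/
open Finset
variable {X : Type*} [DecidableEq X] [Fintype X]

/-- IRC holds iff the choice rule is consistent: removing any contracts that were not
chosen (while keeping all chosen ones) does not change the choice. -/
theorem irc_iff_consistent (C : Finset X → Finset X) (hC : ∀ Y, C Y ⊆ Y) :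
    (∀ (Y : Finset X) (z : X), z ∉ Y → z ∉ C (insert z Y) → C Y = C (insert z Y)) ↔
      (∀ Y Z : Finset X, C Y ⊆ Z → Z ⊆ Y → C Z = C Y) := by
  constructor
  · intro irc Y
    induction Y using Finset.strongInduction with
    | _ Y ih =>
      intro Z hCZ hZY
      rcases eq_or_ssubset_of_subset hZY with rfl | hss
      · rfl
      · obtain ⟨z, hzY, hzZ⟩ := exists_of_ssubset hss
        have hzY' : z ∉ Y.erase z := notMem_erase _ _
        have hins : insert z (Y.erase z) = Y := insert_erase hzY
        have hZ' : Z ⊆ Y.erase z := fun x hx =>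
          mem_erase.2 ⟨fun h => hzZ (h ▸ hx), hZY hx⟩
        have h1 : C (Y.erase z) = C Y := by
          have := irc (Y.erase z) z hzY' (by rw [hins]; exact fun h => hzZ (hCZ h))
          rwa [hins] at this
        have h2 : C Z = C (Y.erase z) :=
          ih (Y.erase z) (erase_ssubset hzY) Z (h1 ▸ hCZ) hZ'
        rw [h2, h1]
  · intro cons Y z hzY hzC
    exact (cons (insert z Y) Y
      (fun x hx => mem_of_mem_insert_of_ne (hC _ hx) (fun h => hzC (h ▸ hx)))
      (subset_insert _ _))
end

section
/- If a choice function C satisfies substitutability and IRC, then C satisfies the following rejection monotonicity: for all Y ⊆ Y' ⊆ X, the rejected set R(Y) = Y \ C(Y) satisfies R(Y) ⊆ R(Y'). -/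
open Finset
variable {X : Type*} [DecidableEq X] [Fintype X]

/-- Substitutability plus IRC implies rejection monotonicity. -/
theorem rejection_monotone (C : Finset X → Finset X) (hC : ∀ Y, C Y ⊆ Y)
    (hsub : ∀ (Y : Finset X) (z z' : X), z ∉ C (insert z Y) → z ∉ C (insert z' (insert z Y)))
    (hirc : ∀ (Y : Finset X) (z : X), z ∉ Y → z ∉ C (insert z Y) → C Y = C (insert z Y)) :
    ∀ Y Y' : Finset X, Y ⊆ Y' → Y \ C Y ⊆ Y' \ C Y' := by
  have step : ∀ (W : Finset X) (a : X), W \ C W ⊆ insert a W \ C (insert a W) := by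
    intro W a x hx
    rw [mem_sdiff] at hx ⊢
    refine ⟨mem_insert_of_mem hx.1, ?_⟩
    have h1 : x ∉ C (insert x W) := by rw [insert_eq_of_mem hx.1]; exact hx.2
    have h2 := hsub W x a h1
    rwa [insert_eq_of_mem hx.1] at h2
  intro Y Y' hYY'
  have key : ∀ S : Finset X, Y \ C Y ⊆ (Y ∪ S) \ C (Y ∪ S) := by
    intro S
    induction S using Finset.induction_on with
    | empty => simp
    | @insert a S ha ih =>
      intro x hx
      have : Y ∪ insert a S = insert a (Y ∪ S) := by
        ext y; simp [or_left_comm]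
      rw [this]
      exact step (Y ∪ S) a (ih hx)
  have hY' : Y' = Y ∪ (Y' \ Y) := by
    rw [union_sdiff_self_eq_union, union_eq_right.mpr hYY']
  rw [hY']
  exact key (Y' \ Y)
end

section
/- Consider a choice rule C̄ defined by processing a finite sequence of k slots, where each slot j has a linear priority order Π_j over contracts-plus-null and selects the Π_j-maximal contract among those not yet selected by earlier slots (selecting the null contract ∅ if no contract is acceptable). Then C̄ satisfies the law of aggregate demand: for all Y ⊆ Y', |C̄(Y)| ≤ |C̄(Y')|. -/
open Finset
variable {X : Type*} [DecidableEq X] [Fintype X]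

/-- From an offer set `Y`, select the `π`-maximal element of `Y ∪ {∅}`
(`none` plays the role of the null contract; higher `π`-value = higher priority). -/
noncomputable def pick (π : Option X → ℕ) (Y : Finset X) : Option X :=
  (((insert (none : Option X) (Y.image some)).toList).argmax π).join

/-- Slot-sequential choice: each slot selects the priority-maximal remaining contract. -/
noncomputable def chosen : List (Option X → ℕ) → Finset X → Finset X
  | [], _ => ∅
  | π :: L, Y =>
    match pick π Y with
    | none => chosen L Y
    | some x => insert x (chosen L (Y.erase x))

/-- Remaining contracts after all slots in the list have selected. -/
noncomputable def remain : List (Option X → ℕ) → Finset X → Finset X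
  | [], Y => Y
  | π :: L, Y =>
    match pick π Y with
    | none => remain L Y
    | some x => remain L (Y.erase x)


lemma pick_eq (π : Option X → ℕ) (Y : Finset X) :
    (((insert (none : Option X) (Y.image some)).toList).argmax π) = some (pick π Y) := by
  unfold pick
  cases h : ((insert (none : Option X) (Y.image some)).toList).argmax π with
  | none =>
    exfalso
    rw [List.argmax_eq_none] at h
    have hn : (none : Option X) ∈ insert (none : Option X) (Y.image some) :=
      Finset.mem_insert_self _ _
    rw [← Finset.mem_toList, h] at hn
    simp at hn
  | some b => simp

lemma pick_mem (π : Option X → ℕ) (Y : Finset X) :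
    pick π Y ∈ insert (none : Option X) (Y.image some) := by
  have := List.argmax_mem (f := π) (m := pick π Y) (pick_eq π Y)
  rwa [Finset.mem_toList] at this

lemma pick_ge (π : Option X → ℕ) (Y : Finset X) {a : Option X}
    (ha : a ∈ insert (none : Option X) (Y.image some)) :
    π a ≤ π (pick π Y) :=
  List.le_of_mem_argmax (by rwa [Finset.mem_toList]) (pick_eq π Y)

lemma pick_mem' {π : Option X → ℕ} {Y : Finset X} {x : X} (h : pick π Y = some x) :
    x ∈ Y := by
  have := pick_mem π Y
  rw [h] at this
  simpa using this

lemma chosen_subset (L : List (Option X → ℕ)) (Y : Finset X) : chosen L Y ⊆ Y := by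
  induction L generalizing Y with
  | nil => simp [chosen]
  | cons π L ih =>
    cases hY : pick π Y with
    | none => simpa [chosen, hY] using ih Y
    | some x =>
      simp only [chosen, hY]
      exact Finset.insert_subset (pick_mem' hY)
        ((ih (Y.erase x)).trans (Finset.erase_subset _ _))

/-- The slot-sequential choice rule satisfies the law of aggregate demand. -/
theorem chosen_lad (L : List (Option X → ℕ)) (hinj : ∀ π ∈ L, Function.Injective π)
    (Y Y' : Finset X) (h : Y ⊆ Y') : (chosen L Y).card ≤ (chosen L Y').card := by
  induction L generalizing Y Y' with
  | nil => simp [chosen]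
  | cons π L ih =>
    have hπ : Function.Injective π := hinj π List.mem_cons_self
    have hL : ∀ p ∈ L, Function.Injective p := fun p hp => hinj p (List.mem_cons_of_mem _ hp)
    cases hY : pick π Y with
    | none =>
      cases hY' : pick π Y' with
      | none =>
        simp only [chosen, hY, hY']
        exact ih hL Y Y' h
      | some x' =>
        simp only [chosen, hY, hY']
        have hsub : Y ⊆ Y'.erase x' := by
          intro y hy
          rw [Finset.mem_erase]
          refine ⟨?_, h hy⟩
          rintro rfl
          have h1 : π (some y) ≤ π none := by
            have := pick_ge π Y (a := some y) (by simp [hy]); rwa [hY] at this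
          have h2 : π none ≤ π (some y) := by
            have := pick_ge π Y' (a := none) (Finset.mem_insert_self _ _)
            rwa [hY'] at this
          exact absurd (hπ (le_antisymm h2 h1)) (Option.some_ne_none _).symm
        exact (ih hL Y (Y'.erase x') hsub).trans (Finset.card_le_card (Finset.subset_insert _ _))
    | some x =>
      have hxY' : x ∈ Y' := h (pick_mem' hY)
      cases hY' : pick π Y' with
      | none =>
        exfalso
        have h1 : π (some x) ≤ π none := by
          have := pick_ge π Y' (a := some x) (by simp [hxY']); rwa [hY'] at this
        have h2 : π none ≤ π (some x) := by
          have := pick_ge π Y (a := none) (Finset.mem_insert_self _ _); rwa [hY] at this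
        exact absurd (hπ (le_antisymm h2 h1)) (Option.some_ne_none _).symm
      | some x' =>
        simp only [chosen, hY, hY']
        have hsub : Y.erase x ⊆ Y'.erase x' := by
          intro y hy
          rw [Finset.mem_erase] at hy ⊢
          refine ⟨?_, h hy.2⟩
          rintro rfl
          have h1 : π (some y) ≤ π (some x) := by
            have := pick_ge π Y (a := some y) (by simp [hy.2]); rwa [hY] at this
          have h2 : π (some x) ≤ π (some y) := by
            have := pick_ge π Y' (a := some x) (by simp [hxY']); rwa [hY'] at this
          have : (some y : Option X) = some x := hπ (le_antisymm h1 h2)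
          exact hy.1 (Option.some_injective _ this)
        have hx : x ∉ chosen L (Y.erase x) :=
          fun hmem => (Finset.mem_erase.mp (chosen_subset L _ hmem)).1 rfl
        have hx' : x' ∉ chosen L (Y'.erase x') :=
          fun hmem => (Finset.mem_erase.mp (chosen_subset L _ hmem)).1 rfl
        rw [Finset.card_insert_of_notMem hx, Finset.card_insert_of_notMem hx']
        exact Nat.succ_le_succ (ih hL _ _ hsub)
end

section
/- The slot-sequential choice rule C̄ (where each slot selects the priority-maximal remaining contract, without removing other contracts of the same agent) satisfies IRC: for all Y ⊆ X and x ∈ Y \ C̄(Y), we have C̄(Y \ {x}) = C̄(Y). -/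
open Finset
variable {X : Type*} [DecidableEq X] [Fintype X]

lemma argmax_toList_iff {π : Option X → ℕ} (hπ : Function.Injective π)
    (S : Finset (Option X)) {m : Option X} :
    m ∈ S.toList.argmax π ↔ m ∈ S ∧ ∀ b ∈ S, π b ≤ π m := by
  rw [List.mem_argmax_iff]
  simp only [Finset.mem_toList]
  constructor
  · rintro ⟨h1, h2, _⟩; exact ⟨h1, h2⟩
  · rintro ⟨h1, h2⟩
    refine ⟨h1, h2, fun a ha hle => ?_⟩
    have : a = m := hπ (le_antisymm (h2 a ha) hle)
    simp [this]

lemma exists_argmax {π : Option X → ℕ} (hπ : Function.Injective π) (Y : Finset X) :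
    ∃ m, ((insert (none : Option X) (Y.image some)).toList).argmax π = some m := by
  have hne : (insert (none : Option X) (Y.image some)).toList ≠ [] := by
    intro h
    have := Finset.toList_eq_nil.mp h
    simp at this
  cases h : ((insert (none : Option X) (Y.image some)).toList).argmax π with
  | none => exact absurd (List.argmax_eq_none.mp h) hne
  | some m => exact ⟨m, rfl⟩

lemma pick_erase {π : Option X → ℕ} (hπ : Function.Injective π) {Y : Finset X} {x : X}
    (hxY : x ∈ Y) (hne : pick π Y ≠ some x) : pick π (Y.erase x) = pick π Y := by
  obtain ⟨m, hm⟩ := exists_argmax hπ Y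
  have hpick : pick π Y = m := by simp [pick, hm]
  have hmem := (argmax_toList_iff hπ _).mp hm
  have hmx : m ≠ some x := by rw [hpick] at hne; exact hne
  have hm' : m ∈ ((insert (none : Option X) ((Y.erase x).image some)).toList).argmax π := by
    rw [argmax_toList_iff hπ]
    constructor
    · rcases hmem.1 |> Finset.mem_insert.mp with h | h
      · simp [h]
      · obtain ⟨y, hy, rfl⟩ := Finset.mem_image.mp h
        have : y ≠ x := fun h => hmx (by rw [h])
        exact Finset.mem_insert_of_mem (Finset.mem_image_of_mem _ (Finset.mem_erase.mpr ⟨this, hy⟩))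
    · intro b hb
      apply hmem.2
      rcases Finset.mem_insert.mp hb with h | h
      · simp [h]
      · obtain ⟨y, hy, rfl⟩ := Finset.mem_image.mp h
        exact Finset.mem_insert_of_mem (Finset.mem_image_of_mem _ (Finset.mem_erase.mp hy).2)
  rw [pick, Option.mem_def.mp hm', hpick]
  rfl

/-- The slot-sequential choice rule satisfies IRC: removing a rejected contract
does not change the chosen set. -/
theorem chosen_irc (L : List (Option X → ℕ)) (hinj : ∀ π ∈ L, Function.Injective π)
    (Y : Finset X) (x : X) (hx : x ∈ Y) (hxr : x ∉ chosen L Y) :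
    chosen L (Y.erase x) = chosen L Y := by
  induction L generalizing Y with
  | nil => rfl
  | cons π L ih =>
    have hπ : Function.Injective π := hinj π List.mem_cons_self
    have hinj' : ∀ p ∈ L, Function.Injective p := fun p hp => hinj p (List.mem_cons_of_mem _ hp)
    cases hp : pick π Y with
    | none =>
      have hpe : pick π (Y.erase x) = none := by
        rw [pick_erase hπ hx (by rw [hp]; simp), hp]
      simp only [chosen, hpe, hp] at *
      exact ih hinj' Y hx hxr
    | some y =>
      simp only [chosen, hp] at hxr
      have hxy : x ≠ y := fun h => hxr (by simp [h])
      have hxc : x ∉ chosen L (Y.erase y) := fun h => hxr (Finset.mem_insert_of_mem h)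
      have hpe : pick π (Y.erase x) = some y := by
        rw [pick_erase hπ hx (by rw [hp]; simp [hxy, Ne.symm hxy]), hp]
      have hec : (Y.erase x).erase y = (Y.erase y).erase x := by
        ext z; simp only [Finset.mem_erase]; tauto
      simp only [chosen, hpe, hp, hec,
        ih hinj' (Y.erase y) (Finset.mem_erase.mpr ⟨hxy, hx⟩) hxc]
end

section
/- In the slot-sequential choice rule C̄, adding a contract z to an offer set Y changes the selection at each slot in a controlled way: at every slot index j, the remaining set in the process on Y ∪ {z} equals the remaining set in the process on Y, possibly together with exactly one extra contract. -/
open Finset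
variable {X : Type*} [DecidableEq X] [Fintype X]

lemma argmax_pick (π : Option X → ℕ) (Y : Finset X) :
    ∃ m, ((insert (none : Option X) (Y.image some)).toList).argmax π = some m ∧
      m ∈ insert (none : Option X) (Y.image some) ∧
      ∀ a ∈ insert (none : Option X) (Y.image some), π a ≤ π m := by
  cases hm : ((insert (none : Option X) (Y.image some)).toList).argmax π with
  | none =>
      rw [List.argmax_eq_none, Finset.toList_eq_nil] at hm
      exact absurd hm (Finset.insert_ne_empty _ _)
  | some m =>
      refine ⟨m, rfl, ?_, ?_⟩
      · have := List.argmax_mem hm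
        rwa [Finset.mem_toList] at this
      · intro a ha
        exact List.le_of_mem_argmax (by rwa [Finset.mem_toList]) hm

lemma pick_some (π : Option X → ℕ) (Y : Finset X) (x : X) (h : pick π Y = some x) :
    x ∈ Y ∧ π none ≤ π (some x) ∧ ∀ y ∈ Y, π (some y) ≤ π (some x) := by
  obtain ⟨m, hm, hmem, hmax⟩ := argmax_pick π Y
  rw [pick, hm] at h
  simp only [Option.join] at h
  subst h
  rcases Finset.mem_insert.1 hmem with h | h
  · simp at h
  · obtain ⟨x', hx', hxx⟩ := Finset.mem_image.1 h
    cases hxx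
    exact ⟨hx', hmax none (Finset.mem_insert_self _ _),
      fun y hy => hmax (some y) (Finset.mem_insert_of_mem (Finset.mem_image_of_mem _ hy))⟩

lemma pick_none (π : Option X → ℕ) (Y : Finset X) (h : pick π Y = none) :
    ∀ y ∈ Y, π (some y) ≤ π none := by
  obtain ⟨m, hm, hmem, hmax⟩ := argmax_pick π Y
  rw [pick, hm] at h
  cases m with
  | none => exact fun y hy => hmax (some y) (Finset.mem_insert_of_mem (Finset.mem_image_of_mem _ hy))
  | some m => simp [Option.join] at h

lemma pick_unique (π : Option X → ℕ) (hinj : Function.Injective π) (Y : Finset X) (x : X)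
    (hx : x ∈ Y)
    (hmax : ∀ a ∈ insert (none : Option X) (Y.image some), π a ≤ π (some x)) :
    pick π Y = some x := by
  obtain ⟨m, hm, hmem, hmax'⟩ := argmax_pick π Y
  have h1 : π m ≤ π (some x) := hmax m hmem
  have h2 : π (some x) ≤ π m :=
    hmax' (some x) (Finset.mem_insert_of_mem (Finset.mem_image_of_mem _ hx))
  have : m = some x := hinj (le_antisymm h1 h2)
  rw [pick, hm, this]; rfl

noncomputable def step (π : Option X → ℕ) (Y : Finset X) : Finset X :=
  match pick π Y with
  | none => Y
  | some x => Y.erase x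

lemma remain_cons (π : Option X → ℕ) (L : List (Option X → ℕ)) (Y : Finset X) :
    remain (π :: L) Y = remain L (step π Y) := by
  cases h : pick π Y <;> simp [remain, step, h]

lemma step_insert (π : Option X → ℕ) (hinj : Function.Injective π) (Y : Finset X) (w : X)
    (hw : w ∉ Y) :
    step π (insert w Y) = step π Y ∨
      ∃ w', w' ∉ step π Y ∧ step π (insert w Y) = insert w' (step π Y) := by
  cases hp : pick π (insert w Y) with
  | none =>
      have hY : pick π Y = none := by
        cases hq : pick π Y with
        | none => rfl
        | some x =>
            obtain ⟨hxY, hnx, _⟩ := pick_some π Y x hq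
            have h1 := pick_none π _ hp x (Finset.mem_insert_of_mem hxY)
            have : π (some x) = π none := le_antisymm h1 hnx
            exact absurd (hinj this) (by simp)
      right
      refine ⟨w, ?_, ?_⟩ <;> simp [step, hY, hp, hw]
  | some x =>
      obtain ⟨hxmem, hnx, hall⟩ := pick_some π _ x hp
      by_cases hxw : x = w
      · subst hxw
        have hstep : step π (insert x Y) = Y := by
          simp [step, hp, Finset.erase_insert hw]
        cases hq : pick π Y with
        | none => left; simp [step, hp, hq, Finset.erase_insert hw]
        | some x' =>
            obtain ⟨hx'Y, _, _⟩ := pick_some π Y x' hq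
            right
            refine ⟨x', ?_, ?_⟩
            · simp [step, hq]
            · rw [hstep]
              simp [step, hq, Finset.insert_erase hx'Y]
      · have hxY : x ∈ Y := by
          rcases Finset.mem_insert.1 hxmem with h | h
          · exact absurd h hxw
          · exact h
        have hY : pick π Y = some x := by
          apply pick_unique π hinj Y x hxY
          intro a ha
          rcases Finset.mem_insert.1 ha with h | h
          · subst h; exact hnx
          · obtain ⟨y, hy, rfl⟩ := Finset.mem_image.1 h
            exact hall y (Finset.mem_insert_of_mem hy)
        right
        refine ⟨w, ?_, ?_⟩
        · simp [step, hY, Finset.mem_erase]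
          intro _; exact fun h => hw h
        · simp [step, hp, hY, Finset.erase_insert_of_ne (Ne.symm hxw)]

lemma remain_rel (L : List (Option X → ℕ)) (hinj : ∀ π ∈ L, Function.Injective π) :
    ∀ Y : Finset X, ∀ w : X, w ∉ Y →
      remain L (insert w Y) = remain L Y ∨
        ∃ w', w' ∉ remain L Y ∧ remain L (insert w Y) = insert w' (remain L Y) := by
  induction L with
  | nil => intro Y w hw; right; exact ⟨w, hw, rfl⟩
  | cons π L ih =>
      intro Y w hw
      rw [remain_cons, remain_cons]
      rcases step_insert π (hinj π (by simp)) Y w hw with h | ⟨w', hw', h⟩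
      · rw [h]; left; rfl
      · rw [h]; exact ih (fun π' h' => hinj π' (List.mem_cons_of_mem _ h')) _ w' hw'

/-- Adding one contract changes the remaining set after each slot by at most one
extra contract. -/
theorem remain_insert (L : List (Option X → ℕ)) (hinj : ∀ π ∈ L, Function.Injective π)
    (Y : Finset X) (z : X) (hz : z ∉ Y) (j : ℕ) :
    remain (L.take j) (insert z Y) = remain (L.take j) Y ∨
      ∃ w, w ∉ remain (L.take j) Y ∧
        remain (L.take j) (insert z Y) = insert w (remain (L.take j) Y) := by
  exact remain_rel (L.take j) (fun π h => hinj π (List.mem_of_mem_take h)) Y z hz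
end

section
/- In the SSPwCT choice procedure of a single branch, the number of contracts chosen from any offer set Y never exceeds the physical capacity n_b of the branch: |C^b(Y)| ≤ n_b. -/
open Finset
variable {X I : Type*} [DecidableEq X] [Fintype X] [DecidableEq I]

/-- SSPwCT run: the list consists of triples (original-slot priority, shadow-slot
priority, transfer bit), each shadow slot immediately following its original slot.
Returns the chosen contracts together with the list of fill indicators of the
original slots.  When a contract of an agent is selected, all of that agent's
contracts are removed from consideration by later slots. -/
noncomputable def sspRun (ag : X → I) :
    List ((Option X → ℕ) × (Option X → ℕ) × Bool) → Finset X → Finset X × List Bool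
  | [], _ => (∅, [])
  | (πo, πe, t) :: L, Y =>
    match pick πo Y with
    | some x =>
      let r := sspRun ag L (Y.filter (fun y => ag y ≠ ag x))
      (insert x r.1, true :: r.2)
    | none =>
      if t then
        match pick πe Y with
        | some x =>
          let r := sspRun ag L (Y.filter (fun y => ag y ≠ ag x))
          (insert x r.1, false :: r.2)
        | none =>
          let r := sspRun ag L Y
          (r.1, false :: r.2)
      else
        let r := sspRun ag L Y
        (r.1, false :: r.2)


/-- The SSPwCT choice never selects more contracts than the branch's physical
capacity, i.e. the number of original slots. -/
theorem sspRun_card_le_capacity (ag : X → I)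
    (L : List ((Option X → ℕ) × (Option X → ℕ) × Bool))
    (hinj : ∀ p ∈ L, Function.Injective p.1 ∧ Function.Injective p.2.1) (Y : Finset X) :
    ((sspRun ag L Y).1).card ≤ L.length := by
  clear hinj
  induction L generalizing Y with
  | nil => simp [sspRun]
  | cons p L ih =>
    obtain ⟨πo, πe, t⟩ := p
    rw [sspRun]
    cases pick πo Y with
    | some x =>
      simp only [List.length_cons]
      exact le_trans (card_insert_le _ _) (Nat.succ_le_succ (ih _))
    | none =>
      by_cases ht : t <;> simp only [ht, if_true, if_false]
      · cases pick πe Y with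
        | some x =>
          simp only [List.length_cons]
          exact le_trans (card_insert_le _ _) (Nat.succ_le_succ (ih _))
        | none => exact le_trans (ih _) (Nat.le_succ _)
      · exact le_trans (ih _) (Nat.le_succ _)
end
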